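/- arXiv:0801.2844 — 2 statements merged into one kernel-verified Lean document; each statement's English description precedes it below -/
import Mathlib

section
/- Let (M_n)_{n∈ℕ} be any sequence of positive reals and let K* = { irrational x ∈ ℝ : Σ_{k≥n} (log a_{k+1}(x))/q_k(x) ≤ M_n for all n ∈ ℕ }. Define Q₋₁ = 0, Q₀ = 1 and Q_{n+1} = e^{M_n Q_n} Q_n + Q_{n−1}. Then for every x ∈ K* and every n ∈ ℕ, the denominators of the convergents of x satisfy F_n ≤ q_n(x) ≤ Q_n. In particular, for each n the denominators q_n(x) are uniformly bounded over x ∈ K*. -/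
open scoped ENNReal Topology

noncomputable def gaussIter (x : ℝ) : ℕ → ℝ
  | 0 => Int.fract x
  | n + 1 => Int.fract (gaussIter x n)⁻¹

noncomputable def pquot (x : ℝ) : ℕ → ℤ
  | 0 => ⌊x⌋
  | n + 1 => ⌊(gaussIter x n)⁻¹⌋

noncomputable def qden (x : ℝ) : ℕ → ℤ
  | 0 => 1
  | 1 => pquot x 1
  | n + 2 => pquot x (n + 2) * qden x (n + 1) + qden x n

noncomputable def pnum (x : ℝ) : ℕ → ℤ
  | 0 => pquot x 0
  | 1 => pquot x 1 * pquot x 0 + 1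
  | n + 2 => pquot x (n + 2) * pnum x (n + 1) + pnum x n

noncomputable def brjunoTerm (x : ℝ) (k : ℕ) : ℝ :=
  Real.log (pquot x (k + 1)) / (qden x k : ℝ)

open Classical in
noncomputable def brjuno (x : ℝ) : ℝ≥0∞ :=
  if Irrational x then ∑' k, ENNReal.ofReal (brjunoTerm x k) else ⊤

noncomputable def brjunoTailE (x : ℝ) (n : ℕ) : ℝ≥0∞ :=
  ∑' k, ENNReal.ofReal (brjunoTerm x (n + k))

noncomputable def cfLen (x : ℝ) : ℕ := sInf {n | gaussIter x n = 0}

noncomputable def brjunoFinite (x : ℝ) : ℝ :=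
  ∑ k ∈ Finset.range (cfLen x), Real.log (pquot x (k + 1)) / (qden x k : ℝ)

def brjunoSuper (t : ℝ) : Set ℝ := {x | ENNReal.ofReal t < brjuno x}

def IsCompOf (A : Set ℝ) (a b : ℝ) : Prop := ∃ x ∈ A, connectedComponentIn A x = Set.Ioo a b

def diamond (κ a b : ℝ) : Set ℂ :=
  {z : ℂ | a < z.re ∧ z.re < b ∧ |z.im| ≤ κ * min (z.re - a) (b - z.re)}

noncomputable def CMset (κ M : ℝ) : Set ℂ :=
  (fun ξ : ℂ => Complex.exp (2 * Real.pi * Complex.I * ξ)) ''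
    (⋃ (a : ℝ) (b : ℝ) (_ : IsCompOf (brjunoSuper M) a b), diamond κ a b)ᶜ ∪ {0}

def KstarR (Ms : ℕ → ℝ) : Set ℝ :=
  {x | Irrational x ∧ ∀ n, brjunoTailE x n ≤ ENNReal.ofReal (Ms n)}

noncomputable def CstarSet (κ : ℝ) (Ms : ℕ → ℝ) : Set ℂ :=
  (fun ξ : ℂ => Complex.exp (2 * Real.pi * Complex.I * ξ)) ''
    (⋃ (a : ℝ) (b : ℝ) (_ : IsCompOf (KstarR Ms)ᶜ a b), diamond κ a b)ᶜ ∪ {0}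

noncomputable def Qbnd (Ms : ℕ → ℝ) : ℕ → ℝ
  | 0 => 1
  | 1 => Real.exp (Ms 0)
  | n + 2 => Real.exp (Ms (n + 1) * Qbnd Ms (n + 1)) * Qbnd Ms (n + 1) + Qbnd Ms n

lemma gauss_props {x : ℝ} (hx : Irrational x) (n : ℕ) :
    Irrational (gaussIter x n) ∧ 0 < gaussIter x n ∧ gaussIter x n < 1 := by
  induction n with
  | zero =>
    have h1 : Irrational (Int.fract x) := by
      unfold Int.fract; exact hx.sub_intCast ⌊x⌋
    refine ⟨h1, lt_of_le_of_ne (Int.fract_nonneg x) ?_, Int.fract_lt_one x⟩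
    intro h
    exact (h1.ne_int 0) (by rw [Int.cast_zero]; exact h.symm)
  | succ n ih =>
    obtain ⟨h1, h2, h3⟩ := ih
    have hinv : Irrational (gaussIter x n)⁻¹ := h1.inv
    have h1' : Irrational (Int.fract (gaussIter x n)⁻¹) := by
      unfold Int.fract; exact hinv.sub_intCast ⌊(gaussIter x n)⁻¹⌋
    refine ⟨h1', lt_of_le_of_ne (Int.fract_nonneg _) ?_, Int.fract_lt_one _⟩
    intro h
    exact (h1'.ne_int 0) (by rw [Int.cast_zero]; exact h.symm)

lemma pquot_pos {x : ℝ} (hx : Irrational x) (n : ℕ) : 1 ≤ pquot x (n + 1) := by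
  obtain ⟨h1, h2, h3⟩ := gauss_props hx n
  have : (1 : ℝ) ≤ (gaussIter x n)⁻¹ := le_of_lt ((one_lt_inv₀ h2).mpr h3)
  exact Int.le_floor.mpr (by exact_mod_cast this)

lemma log_pquot_le {Ms : ℕ → ℝ} {x : ℝ} (hx : x ∈ KstarR Ms) (n : ℕ)
    (hq : 0 < (qden x n : ℝ)) (hM : 0 ≤ Ms n) :
    Real.log (pquot x (n + 1)) ≤ Ms n * (qden x n : ℝ) := by
  obtain ⟨hirr, htail⟩ := hx
  have h0 : ENNReal.ofReal (brjunoTerm x (n + 0)) ≤ brjunoTailE x n :=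
    ENNReal.le_tsum 0
  have h1 : ENNReal.ofReal (brjunoTerm x n) ≤ ENNReal.ofReal (Ms n) := by
    simpa using h0.trans (htail n)
  have h2 : brjunoTerm x n ≤ Ms n := (ENNReal.ofReal_le_ofReal_iff hM).mp h1
  have h3 : Real.log (pquot x (n + 1)) / (qden x n : ℝ) ≤ Ms n := h2
  calc Real.log (pquot x (n + 1))
      = Real.log (pquot x (n + 1)) / (qden x n : ℝ) * (qden x n : ℝ) := by
        field_simp
    _ ≤ Ms n * (qden x n : ℝ) := by
        exact mul_le_mul_of_nonneg_right h3 (le_of_lt hq)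

/-- a priori bounds `F_n ≤ q_n(x) ≤ Q_n` for the denominators of the
convergents of points of `K*`; in particular they are uniformly bounded. -/
theorem statement15 (Ms : ℕ → ℝ) (hMpos : ∀ n, 0 < Ms n) :
    (∀ x ∈ KstarR Ms, ∀ n : ℕ,
      ((Nat.fib (n + 1) : ℝ) ≤ (qden x n : ℝ) ∧ (qden x n : ℝ) ≤ Qbnd Ms n)) ∧
    (∀ n : ℕ, ∃ Cb : ℝ, ∀ x ∈ KstarR Ms, (qden x n : ℝ) ≤ Cb) := by
  have key : ∀ x ∈ KstarR Ms, ∀ n : ℕ,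
      (((Nat.fib (n + 1) : ℝ) ≤ (qden x n : ℝ) ∧ (qden x n : ℝ) ≤ Qbnd Ms n) ∧
       ((Nat.fib (n + 2) : ℝ) ≤ (qden x (n+1) : ℝ) ∧ (qden x (n+1) : ℝ) ≤ Qbnd Ms (n+1))) := by
    intro x hx n
    obtain ⟨hirr, htail⟩ := hx
    have hx' : x ∈ KstarR Ms := ⟨hirr, htail⟩
    have apos : ∀ k, (1 : ℝ) ≤ (pquot x (k + 1) : ℝ) := fun k => by
      exact_mod_cast pquot_pos hirr k
    induction n with
    | zero =>
      have hq0 : qden x 0 = 1 := rfl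
      have hq1 : qden x 1 = pquot x 1 := rfl
      have hfib : ((Nat.fib 2 : ℕ) : ℝ) = 1 := by norm_num
      have ha1 : (1 : ℝ) ≤ (pquot x 1 : ℝ) := apos 0
      have hub : (qden x 1 : ℝ) ≤ Qbnd Ms 1 := by
        have hlog : Real.log (pquot x 1) ≤ Ms 0 * (qden x 0 : ℝ) :=
          log_pquot_le hx' 0 (by rw [hq0]; norm_num) (le_of_lt (hMpos 0))
        have : (pquot x 1 : ℝ) ≤ Real.exp (Ms 0) := by
          have hpos : (0 : ℝ) < (pquot x 1 : ℝ) := lt_of_lt_of_le one_pos ha1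
          have := (Real.log_le_iff_le_exp hpos).mp (by simpa [hq0] using hlog)
          simpa using this
        simpa [hq1, Qbnd] using this
      refine ⟨⟨?_, ?_⟩, ⟨?_, hub⟩⟩
      · simp [hq0]
      · simp [hq0, Qbnd]
      · rw [hq1]; simpa [hfib] using ha1
    | succ n ih =>
      obtain ⟨⟨hfl, hfu⟩, ⟨hgl, hgu⟩⟩ := ih
      refine ⟨⟨hgl, hgu⟩, ?_, ?_⟩
      · have hrec : (qden x (n + 2) : ℝ)
            = (pquot x (n + 2) : ℝ) * (qden x (n + 1) : ℝ) + (qden x n : ℝ) := by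
          show ((pquot x (n + 2) * qden x (n + 1) + qden x n : ℤ) : ℝ) = _
          push_cast; ring
        have hq1pos : (0 : ℝ) ≤ (qden x (n + 1) : ℝ) := by
          have : (0 : ℝ) < ((Nat.fib (n + 2) : ℕ) : ℝ) := by
            exact_mod_cast Nat.fib_pos.mpr (by omega)
          linarith
        have := apos (n + 1)
        have hfib : ((Nat.fib (n + 3) : ℕ) : ℝ)
            = ((Nat.fib (n + 2) : ℕ) : ℝ) + ((Nat.fib (n + 1) : ℕ) : ℝ) := by
          rw [show n + 3 = (n + 1) + 2 by ring, Nat.fib_add_two]; push_cast; ring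
        rw [hrec]
        nlinarith [hfl, hgl, this, hq1pos]
      · have hrec : (qden x (n + 2) : ℝ)
            = (pquot x (n + 2) : ℝ) * (qden x (n + 1) : ℝ) + (qden x n : ℝ) := by
          show ((pquot x (n + 2) * qden x (n + 1) + qden x n : ℤ) : ℝ) = _
          push_cast; ring
        have hq1pos : (0 : ℝ) < (qden x (n + 1) : ℝ) := by
          have : (0 : ℝ) < ((Nat.fib (n + 2) : ℕ) : ℝ) := by
            exact_mod_cast Nat.fib_pos.mpr (by omega)
          linarith
        have hlog : Real.log (pquot x (n + 2)) ≤ Ms (n + 1) * (qden x (n + 1) : ℝ) :=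
          log_pquot_le hx' (n + 1) hq1pos (le_of_lt (hMpos (n + 1)))
        have hapos : (0 : ℝ) < (pquot x (n + 2) : ℝ) := lt_of_lt_of_le one_pos (apos (n + 1))
        have ha : (pquot x (n + 2) : ℝ) ≤ Real.exp (Ms (n + 1) * (qden x (n + 1) : ℝ)) :=
          (Real.log_le_iff_le_exp hapos).mp hlog
        have hexp : Real.exp (Ms (n + 1) * (qden x (n + 1) : ℝ))
            ≤ Real.exp (Ms (n + 1) * Qbnd Ms (n + 1)) := by
          apply Real.exp_le_exp.mpr
          exact mul_le_mul_of_nonneg_left hgu (le_of_lt (hMpos (n + 1)))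
        have ha2 : (pquot x (n + 2) : ℝ) ≤ Real.exp (Ms (n + 1) * Qbnd Ms (n + 1)) :=
          ha.trans hexp
        have hmul : (pquot x (n + 2) : ℝ) * (qden x (n + 1) : ℝ)
            ≤ Real.exp (Ms (n + 1) * Qbnd Ms (n + 1)) * Qbnd Ms (n + 1) :=
          mul_le_mul ha2 hgu (le_of_lt hq1pos) (le_of_lt (Real.exp_pos _))
        rw [hrec]
        show _ ≤ Real.exp (Ms (n + 1) * Qbnd Ms (n + 1)) * Qbnd Ms (n + 1) + Qbnd Ms n
        linarith
  constructor
  · intro x hx n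
    exact (key x hx n).1
  · intro n
    exact ⟨Qbnd Ms n, fun x hx => ((key x hx n).1).2⟩
end

section
/- Let (M_n)_{n∈ℕ} be a decreasing sequence of positive reals with M_n → 0, K* = { irrational x ∈ ℝ : Σ_{k≥n} (log a_{k+1}(x))/q_k(x) ≤ M_n for all n ∈ ℕ }, and A* = ℝ ∖ K*. Let (α⁻, α⁺) be a bounded connected component of the open set A*. Then there is exactly one rational number in (α⁻, α⁺) that is a convergent of both α⁻ and α⁺; moreover this common convergent is the rational of strictly least reduced denominator in (α⁻, α⁺) (its pseudocenter). -/
open scoped ENNReal Topology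

namespace S16

noncomputable def PP (x : ℝ) : ℕ → ℤ
  | 0 => 0
  | 1 => 1
  | n + 2 => pnum x n

noncomputable def QQ (x : ℝ) : ℕ → ℤ
  | 0 => 1
  | 1 => 0
  | n + 2 => qden x n

lemma PP_rec (x : ℝ) : ∀ k, PP x (k+2) = pquot x k * PP x (k+1) + PP x k
  | 0 => by simp [PP, pnum]
  | 1 => by simp [PP, pnum]
  | (n+2) => by simp [PP, pnum]

lemma QQ_rec (x : ℝ) : ∀ k, QQ x (k+2) = pquot x k * QQ x (k+1) + QQ x k
  | 0 => by simp [QQ, qden]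
  | 1 => by simp [QQ, qden]
  | (n+2) => by simp [QQ, qden]

lemma gauss_irr {x : ℝ} (hx : Irrational x) : ∀ k, Irrational (gaussIter x k)
  | 0 => hx.sub_intCast _
  | (k+1) => ((gauss_irr hx k).inv).sub_intCast _

lemma gauss_pos {x : ℝ} (hx : Irrational x) (k : ℕ) : 0 < gaussIter x k := by
  have h := (gauss_irr hx k)
  have h0 : gaussIter x k ≠ 0 := by
    intro hh; rw [hh] at h; exact h ⟨0, by simp⟩
  rcases k with _ | k
  · exact lt_of_le_of_ne (Int.fract_nonneg x) (Ne.symm h0)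
  · exact lt_of_le_of_ne (Int.fract_nonneg _) (Ne.symm h0)

lemma gauss_lt_one (x : ℝ) (k : ℕ) : gaussIter x k < 1 := by
  rcases k with _ | k
  · exact Int.fract_lt_one x
  · exact Int.fract_lt_one _

lemma gauss_inv_gt_one {x : ℝ} (hx : Irrational x) (k : ℕ) : 1 < (gaussIter x k)⁻¹ :=
  (one_lt_inv_iff₀).mpr ⟨gauss_pos hx k, gauss_lt_one x k⟩

lemma pquot_pos {x : ℝ} (hx : Irrational x) (k : ℕ) : 1 ≤ pquot x (k+1) := by
  have := gauss_inv_gt_one hx k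
  show (1:ℤ) ≤ ⌊(gaussIter x k)⁻¹⌋
  exact Int.le_floor.mpr (by exact_mod_cast this.le)

/-- head value at level k : `h_k = a_k + g_k`. -/
noncomputable def hseq (x : ℝ) (k : ℕ) : ℝ := (pquot x k : ℝ) + gaussIter x k

lemma hseq_zero (x : ℝ) : hseq x 0 = x := by
  show (pquot x 0 : ℝ) + gaussIter x 0 = x
  show ((⌊x⌋ : ℤ) : ℝ) + Int.fract x = x
  exact Int.floor_add_fract x

lemma hseq_succ (x : ℝ) (k : ℕ) : hseq x (k+1) = (gaussIter x k)⁻¹ := by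
  show ((⌊(gaussIter x k)⁻¹⌋ : ℤ) : ℝ) + Int.fract (gaussIter x k)⁻¹ = (gaussIter x k)⁻¹
  exact Int.floor_add_fract _

lemma hseq_gt_one {x : ℝ} (hx : Irrational x) (k : ℕ) : 1 < hseq x (k+1) := by
  rw [hseq_succ]; exact gauss_inv_gt_one hx k

lemma hseq_window {x : ℝ} (hx : Irrational x) (k : ℕ) :
    (pquot x k : ℝ) < hseq x k ∧ hseq x k < pquot x k + 1 := by
  constructor
  · simp [hseq]; exact gauss_pos hx k
  · simp [hseq]; exact gauss_lt_one x k

lemma gauss_eq_inv_hseq {x : ℝ} (k : ℕ) : gaussIter x k = (hseq x (k+1))⁻¹ := by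
  rw [hseq_succ, inv_inv]

end S16

namespace S16

lemma PP_eq (x : ℝ) (n : ℕ) : PP x (n+2) = pnum x n := rfl
lemma QQ_eq (x : ℝ) (n : ℕ) : QQ x (n+2) = qden x n := rfl

lemma qden_pos {x : ℝ} (hx : Irrational x) : ∀ k, 1 ≤ qden x k
  | 0 => by simp [qden]
  | 1 => by simpa [qden] using pquot_pos hx 0
  | (k+2) => by
      have h1 := qden_pos hx (k+1)
      have h0 := qden_pos hx k
      have ha := pquot_pos hx (k+1)
      show 1 ≤ pquot x (k+2) * qden x (k+1) + qden x k
      nlinarith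

lemma qden_mono {x : ℝ} (hx : Irrational x) : ∀ k, qden x k ≤ qden x (k+1)
  | 0 => by simpa [qden] using pquot_pos hx 0
  | (k+1) => by
      have h1 := qden_pos hx (k+1)
      have h0 := qden_pos hx k
      have ha := pquot_pos hx (k+1)
      show qden x (k+1) ≤ pquot x (k+2) * qden x (k+1) + qden x k
      nlinarith

lemma qden_le {x : ℝ} (hx : Irrational x) : ∀ {m n : ℕ}, m ≤ n → qden x m ≤ qden x n :=
  fun {m n} h => monotone_nat_of_le_succ (qden_mono hx) h

lemma qden_strict2 {x : ℝ} (hx : Irrational x) (k : ℕ) : qden x k < qden x (k+2) := by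
  have h1 := qden_pos hx (k+1)
  have ha := pquot_pos hx (k+1)
  show qden x k < pquot x (k+2) * qden x (k+1) + qden x k
  nlinarith

lemma qden_ge {x : ℝ} (hx : Irrational x) : ∀ k : ℕ, (k : ℤ) ≤ qden x k
  | 0 => by simp [qden]
  | 1 => by
      have h := pquot_pos hx 0
      norm_num at h
      have h2 : qden x 1 = pquot x 1 := rfl
      rw [h2]; exact_mod_cast h
  | (k+2) => by
      have h1 := qden_ge hx (k+1)
      have h0 := qden_pos hx k
      have ha := pquot_pos hx (k+1)
      have h2 := qden_pos hx (k+1)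
      have hr : qden x (k+2) = pquot x (k+2) * qden x (k+1) + qden x k := rfl
      push_cast
      push_cast at h1
      nlinarith [hr]

lemma det_PQ (x : ℝ) : ∀ k, PP x (k+1) * QQ x k - PP x k * QQ x (k+1) = (-1)^k
  | 0 => by simp [PP, QQ]
  | (k+1) => by
      have h := det_PQ x k
      rw [PP_rec, QQ_rec]
      linear_combination (-1 : ℤ) * h

lemma coprime_PQ (x : ℝ) (k : ℕ) : IsCoprime (PP x (k+1)) (QQ x (k+1)) := by
  rcases Nat.even_or_odd k with he | ho
  · exact ⟨QQ x k, -PP x k, by have := det_PQ x k; rw [he.neg_one_pow] at this; linear_combination this⟩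
  · exact ⟨-QQ x k, PP x k, by have := det_PQ x k; rw [ho.neg_one_pow] at this; linear_combination -this⟩

lemma coprime_pq (x : ℝ) (n : ℕ) : IsCoprime (pnum x n) (qden x n) := by
  have := coprime_PQ x (n+1); rwa [PP_eq, QQ_eq] at this

lemma PQ_congr {x y : ℝ} : ∀ j, (∀ i, i < j → pquot x i = pquot y i) →
    PP x (j+1) = PP y (j+1) ∧ QQ x (j+1) = QQ y (j+1) ∧ PP x j = PP y j ∧ QQ x j = QQ y j
  | 0, _ => by simp [PP, QQ]
  | (j+1), h => by
      obtain ⟨h1, h2, h3, h4⟩ := PQ_congr j (fun i hi => h i (Nat.lt_succ_of_lt hi))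
      refine ⟨?_, ?_, h1, h2⟩
      · rw [PP_rec x j, PP_rec y j, h j (Nat.lt_succ_self j), h1, h3]
      · rw [QQ_rec x j, QQ_rec y j, h j (Nat.lt_succ_self j), h2, h4]

lemma pnum_congr {x y : ℝ} (n : ℕ) (h : ∀ i, i ≤ n → pquot x i = pquot y i) :
    pnum x n = pnum y n := by
  have := (PQ_congr (n+1) (fun i hi => h i (Nat.lt_succ_iff.mp hi))).1
  rwa [PP_eq, PP_eq] at this

lemma qden_congr {x y : ℝ} (n : ℕ) (h : ∀ i, i ≤ n → pquot x i = pquot y i) :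
    qden x n = qden y n := by
  have := (PQ_congr (n+1) (fun i hi => h i (Nat.lt_succ_iff.mp hi))).2.1
  rwa [QQ_eq, QQ_eq] at this

lemma CL {x : ℝ} (hx : Irrational x) :
    ∀ k, x * ((QQ x (k+1) : ℝ) * hseq x k + QQ x k) = (PP x (k+1) : ℝ) * hseq x k + PP x k
  | 0 => by norm_num [PP, QQ, hseq_zero]
  | (k+1) => by
      have IH := CL hx k
      have hpos : 1 < hseq x (k+1) := hseq_gt_one hx k
      have hne : hseq x (k+1) ≠ 0 := by linarith
      have hh : hseq x k = (pquot x k : ℝ) + (hseq x (k+1))⁻¹ := by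
        show (pquot x k : ℝ) + gaussIter x k = _
        rw [gauss_eq_inv_hseq]
      rw [hh] at IH
      rw [QQ_rec, PP_rec]
      push_cast at IH ⊢
      field_simp at IH
      linear_combination IH

noncomputable def Eseq (x : ℝ) (k : ℕ) : ℝ := x * (QQ x k : ℝ) - (PP x k : ℝ)

noncomputable def aE (x : ℝ) (k : ℕ) : ℝ := (-1 : ℝ)^(k+1) * Eseq x (k+1)

lemma E_rec {x : ℝ} (hx : Irrational x) (k : ℕ) :
    hseq x k * Eseq x (k+1) = - Eseq x k := by
  have := CL hx k
  simp only [Eseq]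
  linear_combination this

lemma aE_pos_le {x : ℝ} (hx : Irrational x) : ∀ k, 0 < aE x k ∧ aE x k ≤ 1
  | 0 => by
      have h1 : aE x 0 = 1 := by simp [aE, Eseq, PP, QQ]
      rw [h1]; norm_num
  | (k+1) => by
      obtain ⟨h1, h2⟩ := aE_pos_le hx k
      have hrec := E_rec hx (k+1)
      have hh := hseq_gt_one hx k
      have hv : hseq x (k+1) * aE x (k+1) = aE x k := by
        simp only [aE]
        linear_combination ((-1:ℝ)^(k+2)) * hrec
      constructor
      · nlinarith
      · nlinarith

lemma aE_dec {x : ℝ} (hx : Irrational x) (k : ℕ) : aE x (k+1) < aE x k := by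
  obtain ⟨h1, h2⟩ := aE_pos_le hx k
  obtain ⟨h1', h2'⟩ := aE_pos_le hx (k+1)
  have hrec := E_rec hx (k+1)
  have hh := hseq_gt_one hx k
  have hv : hseq x (k+1) * aE x (k+1) = aE x k := by
    simp only [aE]
    linear_combination ((-1:ℝ)^(k+2)) * hrec
  nlinarith

lemma aE_pos {x : ℝ} (hx : Irrational x) (k : ℕ) : 0 < aE x k := (aE_pos_le hx k).1

lemma aE_anti {x : ℝ} (hx : Irrational x) : StrictAnti (aE x) :=
  strictAnti_nat_of_succ_lt (fun k => aE_dec hx k)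

lemma sub_conv {x : ℝ} (hx : Irrational x) (k : ℕ) :
    x - (pnum x k : ℝ)/(qden x k : ℝ) = Eseq x (k+2) / (qden x k : ℝ) := by
  have hq : (0:ℝ) < (qden x k : ℝ) := by exact_mod_cast qden_pos hx k
  have hq' : (qden x k : ℝ) ≠ 0 := ne_of_gt hq
  simp only [Eseq, QQ_eq, PP_eq]
  field_simp

lemma Eseq_eq_aE (x : ℝ) (k : ℕ) : Eseq x (k+2) = (-1)^(k+2) * aE x (k+1) := by
  simp only [aE]
  rcases Nat.even_or_odd (k+2) with he | ho
  · rw [he.neg_one_pow]; ring_nf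
  · rw [ho.neg_one_pow]; ring_nf

lemma conv_lt_of_even {x : ℝ} (hx : Irrational x) {k : ℕ} (hk : Even k) :
    (pnum x k : ℝ)/(qden x k : ℝ) < x := by
  have h := sub_conv hx k
  have hq : (0:ℝ) < (qden x k : ℝ) := by exact_mod_cast qden_pos hx k
  have hE : Eseq x (k+2) = aE x (k+1) := by
    rw [Eseq_eq_aE, (hk.add even_two).neg_one_pow, one_mul]
  have ha := aE_pos hx (k+1)
  have : 0 < x - (pnum x k : ℝ)/(qden x k : ℝ) := by
    rw [h, hE]; positivity
  linarith

lemma conv_gt_of_odd {x : ℝ} (hx : Irrational x) {k : ℕ} (hk : Odd k) :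
    x < (pnum x k : ℝ)/(qden x k : ℝ) := by
  have h := sub_conv hx k
  have hq : (0:ℝ) < (qden x k : ℝ) := by exact_mod_cast qden_pos hx k
  have hE : Eseq x (k+2) = - aE x (k+1) := by
    rw [Eseq_eq_aE, (hk.add_even even_two).neg_one_pow]; ring
  have ha := aE_pos hx (k+1)
  have : x - (pnum x k : ℝ)/(qden x k : ℝ) < 0 := by
    rw [h, hE]
    exact div_neg_of_neg_of_pos (by linarith) hq
  linarith

/-- distance to the k-th convergent -/
noncomputable def dd (x : ℝ) (k : ℕ) : ℝ := aE x (k+1) / (qden x k : ℝ)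

lemma dd_eq_dist {x : ℝ} (hx : Irrational x) (k : ℕ) :
    |x - (pnum x k : ℝ)/(qden x k : ℝ)| = dd x k := by
  have h := sub_conv hx k
  have hq : (0:ℝ) < (qden x k : ℝ) := by exact_mod_cast qden_pos hx k
  have ha := aE_pos hx (k+1)
  rw [h, Eseq_eq_aE, dd]
  rcases Nat.even_or_odd (k+2) with he | ho
  · rw [he.neg_one_pow, one_mul, abs_div, abs_of_pos ha, abs_of_pos hq]
  · rw [ho.neg_one_pow, abs_div, abs_of_pos hq, neg_one_mul, abs_neg, abs_of_pos ha]

lemma dd_anti {x : ℝ} (hx : Irrational x) : StrictAnti (dd x) := by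
  apply strictAnti_nat_of_succ_lt
  intro k
  have ha1 := aE_pos hx (k+2)
  have ha2 := aE_dec hx (k+1)
  have hq1 : (0:ℝ) < (qden x k : ℝ) := by exact_mod_cast qden_pos hx k
  have hq2 : (0:ℝ) < (qden x (k+1) : ℝ) := by exact_mod_cast qden_pos hx (k+1)
  have hqm : (qden x k : ℝ) ≤ (qden x (k+1) : ℝ) := by exact_mod_cast qden_mono hx k
  rw [dd, dd, div_lt_div_iff₀ hq2 hq1]
  nlinarith

end S16
namespace S16

lemma rat_eq_of {p q : ℤ} (hq : 0 < q) (hcop : IsCoprime p q) (r : ℚ)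
    (h : (r : ℝ) = (p : ℝ) / (q : ℝ)) : r.num = p ∧ (r.den : ℤ) = q := by
  have hq0 : (q : ℝ) ≠ 0 := by exact_mod_cast hq.ne'
  have hdpos : 0 < ((r.den : ℤ)) := by exact_mod_cast r.pos
  have hd0 : ((r.den : ℤ) : ℝ) ≠ 0 := by exact_mod_cast hdpos.ne'
  have hr : (r : ℝ) = (r.num : ℝ) / ((r.den : ℤ) : ℝ) := by
    rw [Rat.cast_def]; norm_num
  rw [hr] at h
  have key : (r.num : ℝ) * (q : ℝ) = (p : ℝ) * ((r.den : ℤ) : ℝ) := by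
    push_cast
    field_simp at h
    push_cast at h; linarith
  have keyz : r.num * q = p * (r.den : ℤ) := by exact_mod_cast key
  have hcop2 : IsCoprime r.num ((r.den : ℤ)) := by
    rw [Int.isCoprime_iff_gcd_eq_one]
    exact r.reduced
  have h1 : q ∣ (r.den : ℤ) :=
    hcop.symm.dvd_of_dvd_mul_left ⟨r.num, by linarith⟩
  have h2 : (r.den : ℤ) ∣ q :=
    hcop2.symm.dvd_of_dvd_mul_left ⟨p, by linarith⟩
  have hqd : (r.den : ℤ) = q := Int.dvd_antisymm hdpos.le hq.le h2 h1
  refine ⟨?_, hqd⟩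
  have : r.num * q = p * q := by rw [keyz, hqd]
  exact mul_right_cancel₀ hq.ne' this

lemma moeb_irr {P P' Q Q' : ℤ} (hdet : P * Q' - P' * Q = 1 ∨ P * Q' - P' * Q = -1)
    {t : ℝ} (ht : Irrational t) (hD : (Q : ℝ) * t + (Q' : ℝ) ≠ 0) :
    Irrational (((P : ℝ) * t + (P' : ℝ)) / ((Q : ℝ) * t + (Q' : ℝ))) := by
  by_contra hcon
  rw [Irrational] at hcon
  push_neg at hcon
  obtain ⟨r, hr⟩ := hcon
  have key : t * ((P : ℝ) - (r : ℝ) * Q) = (r : ℝ) * Q' - P' := by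
    have := hr
    rw [eq_div_iff hD] at this
    linarith
  rcases eq_or_ne ((P : ℝ) - (r : ℝ) * Q) 0 with h0 | h0
  · have h1 : (r : ℝ) * (Q' : ℝ) - (P' : ℝ) = 0 := by rw [← key, h0, mul_zero]
    have hz : ((P : ℝ) * Q' - P' * Q) = 0 := by linear_combination (Q' : ℝ) * h0 + (Q : ℝ) * h1
    have hzz : P * Q' - P' * Q = 0 := by exact_mod_cast hz
    rcases hdet with hd | hd <;> omega
  · apply ht
    refine ⟨(r * (Q' : ℚ) - (P' : ℚ)) / ((P : ℚ) - r * (Q : ℚ)), ?_⟩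
    have hcast : (((r * (Q' : ℚ) - (P' : ℚ)) / ((P : ℚ) - r * (Q : ℚ)) : ℚ) : ℝ)
        = ((r : ℝ) * Q' - P') / ((P : ℝ) - (r : ℝ) * Q) := by
      push_cast
      ring
    rw [hcast, ← key]
    exact mul_div_cancel_right₀ t h0

noncomputable def gold : ℝ := (1 + Real.sqrt 5) / 2

lemma sqrt5_sq : Real.sqrt 5 ^ 2 = 5 := Real.sq_sqrt (by norm_num)

lemma sqrt5_gt : 2 < Real.sqrt 5 := by
  nlinarith [sqrt5_sq, Real.sqrt_nonneg 5]

lemma sqrt5_lt : Real.sqrt 5 < 3 := by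
  nlinarith [sqrt5_sq, Real.sqrt_nonneg 5]

lemma gold_gt : 3/2 < gold := by unfold gold; linarith [sqrt5_gt]

lemma gold_lt : gold < 2 := by unfold gold; linarith [sqrt5_lt]

lemma gold_irr : Irrational gold := by
  have h5 : Irrational (Real.sqrt 5) := (by norm_num : Nat.Prime 5).irrational_sqrt
  have h15 : Irrational (1 + Real.sqrt 5) := by simpa using h5.intCast_add 1
  have h3 := h15.div_intCast (m := 2) (by norm_num)
  unfold gold
  simpa using h3

lemma gold_floor : ⌊gold⌋ = 1 := by
  have h1 := gold_gt
  have h2 := gold_lt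
  rw [Int.floor_eq_iff]
  constructor <;> push_cast <;> linarith

lemma gold_fract : Int.fract gold = gold - 1 := by
  unfold Int.fract
  rw [gold_floor]
  norm_num

lemma gold_sq : gold ^ 2 = gold + 1 := by
  unfold gold
  nlinarith [sqrt5_sq]

lemma gold_inv : (gold - 1)⁻¹ = gold := by
  have h : (gold - 1) * gold = 1 := by nlinarith [gold_sq]
  exact inv_eq_of_mul_eq_one_right h

lemma det_pq (x : ℝ) (k : ℕ) :
    pnum x (k+1) * qden x k - pnum x k * qden x (k+1) = (-1)^k := by
  have h := det_PQ x (k+2)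
  rw [show PP x (k+2+1) = pnum x (k+1) from rfl, PP_eq, QQ_eq,
    show QQ x (k+2+1) = qden x (k+1) from rfl] at h
  rw [h, pow_succ, pow_succ]
  ring

lemma conv_gap {x : ℝ} (hx : Irrational x) (k : ℕ) :
    (pnum x (k+1) : ℝ)/(qden x (k+1) : ℝ) - (pnum x k : ℝ)/(qden x k : ℝ)
      = (-1)^k / ((qden x k : ℝ) * (qden x (k+1) : ℝ)) := by
  have hq1 : (0:ℝ) < (qden x k : ℝ) := by exact_mod_cast qden_pos hx k
  have hq2 : (0:ℝ) < (qden x (k+1) : ℝ) := by exact_mod_cast qden_pos hx (k+1)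
  have hd : (pnum x (k+1) : ℝ) * (qden x k : ℝ) - (pnum x k : ℝ) * (qden x (k+1) : ℝ)
      = (-1)^k := by exact_mod_cast det_pq x k
  field_simp
  linear_combination hd

end S16
namespace S16

lemma QQ_nonneg {x : ℝ} (hx : Irrational x) : ∀ j, 0 ≤ QQ x j
  | 0 => by norm_num [QQ]
  | 1 => by norm_num [QQ]
  | (j+2) => by rw [QQ_eq]; linarith [qden_pos hx j]

lemma eq_of_pquot_eq {x y : ℝ} (hx : Irrational x) (hy : Irrational y)
    (h : ∀ k, pquot x k = pquot y k) : x = y := by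
  by_contra hne
  have habs : 0 < |x - y| := abs_pos.mpr (sub_ne_zero.mpr hne)
  obtain ⟨n, hn⟩ := exists_nat_gt (1 / |x - y|)
  have hn0 : 0 < (n:ℝ) := lt_trans (by positivity) hn
  set k := 2 * n + 2 with hk
  have hke : Even k := by exact ⟨n+1, by omega⟩
  have hko : Odd (k+1) := by exact ⟨n+1, by omega⟩
  have hcp : pnum x k = pnum y k := pnum_congr k (fun i _ => h i)
  have hcq : qden x k = qden y k := qden_congr k (fun i _ => h i)
  have hcp1 : pnum x (k+1) = pnum y (k+1) := pnum_congr (k+1) (fun i _ => h i)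
  have hcq1 : qden x (k+1) = qden y (k+1) := qden_congr (k+1) (fun i _ => h i)
  have h1x := conv_lt_of_even hx hke
  have h2x := conv_gt_of_odd hx hko
  have h1y := conv_lt_of_even hy hke
  have h2y := conv_gt_of_odd hy hko
  rw [← hcp, ← hcq] at h1y
  rw [← hcp1, ← hcq1] at h2y
  have hgap := conv_gap hx k
  rw [hke.neg_one_pow] at hgap
  have hq1 : (0:ℝ) < (qden x k : ℝ) := by exact_mod_cast qden_pos hx k
  have hq2 : (0:ℝ) < (qden x (k+1) : ℝ) := by exact_mod_cast qden_pos hx (k+1)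
  have hqk : (k : ℝ) ≤ (qden x k : ℝ) := by exact_mod_cast qden_ge hx k
  have hq2' : (1:ℝ) ≤ (qden x (k+1) : ℝ) := by exact_mod_cast qden_pos hx (k+1)
  have hbound : 1 / ((qden x k : ℝ) * (qden x (k+1) : ℝ)) ≤ 1 / (n : ℝ) := by
    apply one_div_le_one_div_of_le hn0
    have : (n:ℝ) ≤ (k:ℝ) := by rw [hk]; push_cast; linarith
    nlinarith
  have habs2 : |x - y| < 1 / (n:ℝ) := by
    rw [abs_sub_lt_iff]
    constructor <;> nlinarith
  rw [lt_div_iff₀ hn0] at habs2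
  rw [div_lt_iff₀ habs] at hn
  nlinarith

/-- Möbius map attached to prefix of length `k`. -/
noncomputable def FF (x : ℝ) (k : ℕ) (t : ℝ) : ℝ :=
  ((PP x (k+1) : ℝ) * t + (PP x k : ℝ)) / ((QQ x (k+1) : ℝ) * t + (QQ x k : ℝ))

lemma DD_pos {x : ℝ} (hx : Irrational x) (k : ℕ) {t : ℝ} (ht : k ≠ 0 → 0 < t) :
    0 < (QQ x (k+1) : ℝ) * t + (QQ x k : ℝ) := by
  rcases k with _ | k
  · norm_num [QQ]
  · have h1 : 1 ≤ QQ x (k+2) := by rw [QQ_eq]; exact qden_pos hx k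
    have h0 : 0 ≤ QQ x (k+1) := QQ_nonneg hx (k+1)
    have h1' : (1:ℝ) ≤ (QQ x (k+2) : ℝ) := by exact_mod_cast h1
    have h0' : (0:ℝ) ≤ (QQ x (k+1) : ℝ) := by exact_mod_cast h0
    have htt := ht (by omega)
    nlinarith

lemma FF_zero (x : ℝ) (t : ℝ) : FF x 0 t = t := by
  simp [FF, PP, QQ]

lemma conv_build {x : ℝ} (hx : Irrational x) :
    ∀ (k : ℕ) (t : ℝ), Irrational t → 1 < t →
      (∀ i, i < k → pquot (FF x k t) i = pquot x i) ∧
      (∀ m, k = m + 1 → gaussIter (FF x k t) m = t⁻¹)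
  | 0 => by
      intro t _ _
      exact ⟨fun i hi => absurd hi (Nat.not_lt_zero i), fun m hm => by omega⟩
  | (k+1) => by
      intro t ht ht1
      have htpos : 0 < t := lt_trans one_pos ht1
      have htne : t ≠ 0 := ne_of_gt htpos
      have hinv_pos : 0 < t⁻¹ := by positivity
      have hinv_lt : t⁻¹ < 1 := by
        rw [inv_lt_one_iff₀]; right; exact ht1
      set t' : ℝ := (pquot x k : ℝ) + t⁻¹ with ht'
      have hti' : Irrational t' := (ht.inv).intCast_add _
      have hfloor' : ⌊t'⌋ = pquot x k := by
        rw [ht', Int.floor_intCast_add]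
        have : ⌊t⁻¹⌋ = 0 := by
          rw [Int.floor_eq_zero_iff]
          exact ⟨le_of_lt hinv_pos, hinv_lt⟩
        omega
      have hfract' : Int.fract t' = t⁻¹ := by
        rw [ht', Int.fract_intCast_add]
        exact Int.fract_eq_self.mpr ⟨le_of_lt hinv_pos, hinv_lt⟩
      have hFF : FF x (k+1) t = FF x k t' := by
        have hD1 : ((QQ x (k+2) : ℝ) * t + (QQ x (k+1) : ℝ)) ≠ 0 := by
          have := DD_pos hx (k+1) (t := t) (fun _ => htpos)
          exact ne_of_gt this
        have hD2 : ((QQ x (k+1) : ℝ) * t' + (QQ x k : ℝ)) ≠ 0 := by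
          rcases Nat.eq_zero_or_pos k with hk0 | hkpos
          · subst hk0; norm_num [QQ]
          · apply ne_of_gt
            apply DD_pos hx k (t := t')
            intro _
            have h1z := pquot_pos hx (k-1)
            have hkk : k - 1 + 1 = k := Nat.succ_pred_eq_of_pos hkpos
            rw [hkk] at h1z
            have h1 : (1:ℝ) ≤ (pquot x k : ℝ) := by exact_mod_cast h1z
            rw [ht']
            linarith
        rw [FF, FF, div_eq_div_iff hD1 hD2]
        rw [QQ_rec, PP_rec]
        push_cast
        rw [ht']
        field_simp
        ring
      rcases Nat.eq_zero_or_pos k with hk0 | hkpos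
      · subst hk0
        have hz : FF x 1 t = t' := by rw [hFF, FF_zero]
        constructor
        · intro i hi
          have hi0 : i = 0 := by omega
          subst hi0
          show ⌊FF x 1 t⌋ = ⌊x⌋
          rw [hz, hfloor']
          rfl
        · intro m hm
          have hm0 : m = 0 := by omega
          subst hm0
          show Int.fract (FF x 1 t) = t⁻¹
          rw [hz, hfract']
      · have ht'1 : 1 < t' := by
          have h1z := pquot_pos hx (k-1)
          have hkk : k - 1 + 1 = k := Nat.succ_pred_eq_of_pos hkpos
          rw [hkk] at h1z
          have h1 : (1:ℝ) ≤ (pquot x k : ℝ) := by exact_mod_cast h1z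
          rw [ht']; linarith
        obtain ⟨ih1, ih2⟩ := conv_build hx k t' hti' ht'1
        have hg : gaussIter (FF x k t') (k-1) = t'⁻¹ :=
          ih2 (k-1) (Nat.succ_pred_eq_of_pos hkpos).symm
        have hk1 : k = (k-1) + 1 := (Nat.succ_pred_eq_of_pos hkpos).symm
        constructor
        · intro i hi
          rcases Nat.lt_or_ge i k with hik | hik
          · rw [hFF]; exact ih1 i hik
          · have hik2 : i = k := by omega
            rw [hFF, hik2]
            have hq : pquot (FF x k t') ((k-1)+1) = ⌊(gaussIter (FF x k t') (k-1))⁻¹⌋ := rfl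
            rw [← hk1] at hq
            rw [hq, hg, inv_inv, hfloor']
        · intro m' hm'
          have hmk : m' = k := by omega
          rw [hFF, hmk]
          have hgs : gaussIter (FF x k t') ((k-1)+1) = Int.fract ((gaussIter (FF x k t') (k-1))⁻¹) := rfl
          rw [← hk1] at hgs
          rw [hgs, hg, inv_inv, hfract']

end S16
namespace S16

lemma noble_pquot {x : ℝ} (hx : Irrational x) (N : ℕ) (c : ℤ) (hc : N ≠ 0 → 0 ≤ c) :
    Irrational (FF x N ((c:ℝ) + gold)) ∧
    (∀ i, i < N → pquot (FF x N ((c:ℝ) + gold)) i = pquot x i) ∧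
    pquot (FF x N ((c:ℝ) + gold)) N = c + 1 ∧
    (∀ j, N < j → pquot (FF x N ((c:ℝ) + gold)) j = 1) := by
  set t : ℝ := (c:ℝ) + gold with htdef
  have hti : Irrational t := gold_irr.intCast_add c
  have htfloor : ⌊t⌋ = c + 1 := by
    rw [htdef, Int.floor_intCast_add, gold_floor]
  have htfract : Int.fract t = gold - 1 := by
    rw [htdef, Int.fract_intCast_add, gold_fract]
  set z : ℝ := FF x N t with hzdef
  have hfirst : (∀ i, i < N → pquot z i = pquot x i) ∧ pquot z N = c + 1 ∧
      gaussIter z N = gold - 1 := by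
    rcases Nat.eq_zero_or_pos N with hN0 | hNpos
    · subst hN0
      have hz : z = t := FF_zero x t
      refine ⟨fun i hi => absurd hi (Nat.not_lt_zero i), ?_, ?_⟩
      · show ⌊z⌋ = c + 1
        rw [hz, htfloor]
      · show Int.fract z = gold - 1
        rw [hz, htfract]
    · have ht1 : 1 < t := by
        have hc0 : (0:ℝ) ≤ (c:ℝ) := by exact_mod_cast hc (by omega)
        have := gold_gt
        rw [htdef]; linarith
      obtain ⟨ih1, ih2⟩ := conv_build hx N t hti ht1
      have hg : gaussIter z (N-1) = t⁻¹ := ih2 (N-1) (Nat.succ_pred_eq_of_pos hNpos).symm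
      have hk1 : N = (N-1) + 1 := (Nat.succ_pred_eq_of_pos hNpos).symm
      refine ⟨ih1, ?_, ?_⟩
      · have hq : pquot z ((N-1)+1) = ⌊(gaussIter z (N-1))⁻¹⌋ := rfl
        rw [← hk1] at hq
        rw [hq, hg, inv_inv, htfloor]
      · have hgs : gaussIter z ((N-1)+1) = Int.fract ((gaussIter z (N-1))⁻¹) := rfl
        rw [← hk1] at hgs
        rw [hgs, hg, inv_inv, htfract]
  obtain ⟨hpre, hN', hgN⟩ := hfirst
  have htail : ∀ j, gaussIter z (N + j) = gold - 1 := by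
    intro j
    induction j with
    | zero => simpa using hgN
    | succ j ih =>
        have : gaussIter z (N + (j+1)) = Int.fract ((gaussIter z (N + j))⁻¹) := rfl
        rw [this, ih, gold_inv, gold_fract]
  have hones : ∀ j, N < j → pquot z j = 1 := by
    intro j hj
    have hj1 : j = (N + (j - N - 1)) + 1 := by omega
    have : pquot z ((N + (j - N - 1)) + 1) = ⌊(gaussIter z (N + (j - N - 1)))⁻¹⌋ := rfl
    rw [← hj1] at this
    rw [this, htail, gold_inv, gold_floor]
  have hirr : Irrational z := by
    have hdet := det_PQ x N
    have hD : ((QQ x (N+1) : ℝ) * t + (QQ x N : ℝ)) ≠ 0 := by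
      apply ne_of_gt
      apply DD_pos hx N
      intro hNne
      have hc0 : (0:ℝ) ≤ (c:ℝ) := by exact_mod_cast hc hNne
      have := gold_gt
      rw [htdef]; linarith
    have : Irrational (((PP x (N+1) : ℝ) * t + (PP x N : ℝ)) / ((QQ x (N+1) : ℝ) * t + (QQ x N : ℝ))) := by
      apply moeb_irr _ hti hD
      rcases Nat.even_or_odd N with he | ho
      · left; rw [det_PQ x N, he.neg_one_pow]
      · right; rw [det_PQ x N, ho.neg_one_pow]
    exact this
  exact ⟨hirr, hpre, hN', hones⟩

lemma mem_KstarR {Ms : ℕ → ℝ} {x : ℝ} (h : x ∈ KstarR Ms) :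
    Irrational x ∧ ∀ n, brjunoTailE x n ≤ ENNReal.ofReal (Ms n) := h

lemma noble_mem (Ms : ℕ → ℝ) {x : ℝ} (hxK : x ∈ KstarR Ms) (N : ℕ) (c : ℤ)
    (hc : N ≠ 0 → 0 ≤ c) (hdom : c + 1 ≤ pquot x N) :
    FF x N ((c:ℝ) + gold) ∈ KstarR Ms := by
  obtain ⟨hxirr, hxtail⟩ := mem_KstarR hxK
  obtain ⟨hzirr, hpre, hN, htail⟩ := noble_pquot hxirr N c hc
  set z : ℝ := FF x N ((c:ℝ) + gold) with hzdef
  refine ⟨hzirr, fun n => le_trans ?_ (hxtail n)⟩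
  unfold brjunoTailE
  apply ENNReal.tsum_le_tsum
  intro k
  set j := n + k with hjdef
  rcases lt_trichotomy (j+1) N with hlt | heq | hgt
  · have e1 : pquot z (j+1) = pquot x (j+1) := hpre _ hlt
    have e2 : qden z j = qden x j := qden_congr j (fun i hi => hpre i (by omega))
    unfold brjunoTerm
    rw [e1, e2]
  · have hN1 : N ≠ 0 := by omega
    have e2 : qden z j = qden x j := qden_congr j (fun i hi => hpre i (by omega))
    apply ENNReal.ofReal_le_ofReal
    unfold brjunoTerm
    rw [e2, heq, hN]
    have hc0 : 0 ≤ c := hc hN1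
    have hpos : (0:ℝ) < ((c + 1 : ℤ) : ℝ) := by exact_mod_cast (by omega : 0 < c + 1)
    have hposN : (0:ℝ) < ((pquot x N : ℤ) : ℝ) := by
      exact_mod_cast (by omega : 0 < pquot x N)
    have hle : ((c + 1 : ℤ) : ℝ) ≤ ((pquot x N : ℤ) : ℝ) := by exact_mod_cast hdom
    have hq : (0:ℝ) < (qden x j : ℝ) := by exact_mod_cast qden_pos hxirr j
    rw [div_le_div_iff_of_pos_right hq]
    exact (Real.log_le_log_iff hpos hposN).mpr hle
  · have e1 : pquot z (j+1) = 1 := htail _ hgt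
    have : brjunoTerm z j = 0 := by
      unfold brjunoTerm
      rw [e1]
      norm_num
    rw [this]
    simp

end S16
namespace S16

lemma conv_den {x : ℝ} (hx : Irrational x) (r : ℚ) (n : ℕ)
    (h : (r:ℝ) = (pnum x n : ℝ)/(qden x n : ℝ)) : r.num = pnum x n ∧ (r.den : ℤ) = qden x n :=
  rat_eq_of (by exact_mod_cast qden_pos hx n) (coprime_pq x n) r h

lemma odd_of_conv_gt {x : ℝ} (hx : Irrational x) {r : ℚ} {n : ℕ}
    (h : (r:ℝ) = (pnum x n : ℝ)/(qden x n : ℝ)) (hgt : x < (r:ℝ)) : Odd n := by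
  rw [← Nat.not_even_iff_odd]
  intro he
  have := conv_lt_of_even hx he
  rw [← h] at this
  linarith

lemma even_of_conv_lt {x : ℝ} (hx : Irrational x) {r : ℚ} {n : ℕ}
    (h : (r:ℝ) = (pnum x n : ℝ)/(qden x n : ℝ)) (hlt : (r:ℝ) < x) : Even n := by
  rw [← Nat.not_odd_iff_even]
  intro ho
  have := conv_gt_of_odd hx ho
  rw [← h] at this
  linarith

lemma dd_eq_right {x : ℝ} (hx : Irrational x) {r : ℚ} {n : ℕ}
    (h : (r:ℝ) = (pnum x n : ℝ)/(qden x n : ℝ)) (hgt : x < (r:ℝ)) :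
    dd x n = (r:ℝ) - x := by
  rw [← dd_eq_dist hx n, ← h, abs_sub_comm, abs_of_pos (by linarith)]

lemma dd_eq_left {x : ℝ} (hx : Irrational x) {r : ℚ} {n : ℕ}
    (h : (r:ℝ) = (pnum x n : ℝ)/(qden x n : ℝ)) (hlt : (r:ℝ) < x) :
    dd x n = x - (r:ℝ) := by
  rw [← dd_eq_dist hx n, ← h, abs_of_pos (by linarith)]

lemma uniq_aux (αm αp : ℝ) (hm : Irrational αm) (hp : Irrational αp) (r s : ℚ)
    (hr1 : αm < (r:ℝ)) (hs2 : (s:ℝ) < αp)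
    (hrm : ∃ n, (r:ℝ) = (pnum αm n : ℝ)/(qden αm n : ℝ))
    (hrp : ∃ n, (r:ℝ) = (pnum αp n : ℝ)/(qden αp n : ℝ))
    (hsm : ∃ n, (s:ℝ) = (pnum αm n : ℝ)/(qden αm n : ℝ))
    (hsp : ∃ n, (s:ℝ) = (pnum αp n : ℝ)/(qden αp n : ℝ))
    (hlt : (r:ℝ) < (s:ℝ)) : False := by
  obtain ⟨i, hi⟩ := hrm
  obtain ⟨i', hi'⟩ := hsm
  obtain ⟨j, hj⟩ := hrp
  obtain ⟨j', hj'⟩ := hsp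
  have hs1 : αm < (s:ℝ) := by linarith
  have hr2 : (r:ℝ) < αp := by linarith
  have hio : Odd i := odd_of_conv_gt hm hi hr1
  have hio' : Odd i' := odd_of_conv_gt hm hi' hs1
  have hje : Even j := even_of_conv_lt hp hj hr2
  have hje' : Even j' := even_of_conv_lt hp hj' hs2
  -- side αm : s farther
  have hdm : dd αm i < dd αm i' := by
    rw [dd_eq_right hm hi hr1, dd_eq_right hm hi' hs1]
    linarith
  have hii : i' < i := (dd_anti hm).lt_iff_gt.mp hdm
  have higap : i' + 2 ≤ i := by
    obtain ⟨a, ha⟩ := hio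
    obtain ⟨b, hb⟩ := hio'
    omega
  have hqm : qden αm i' < qden αm i :=
    lt_of_lt_of_le (qden_strict2 hm i') (qden_le hm higap)
  have hrden : (r.den : ℤ) = qden αm i := (conv_den hm r i hi).2
  have hsden : (s.den : ℤ) = qden αm i' := (conv_den hm s i' hi').2
  -- side αp : r farther
  have hdp : dd αp j' < dd αp j := by
    rw [dd_eq_left hp hj hr2, dd_eq_left hp hj' hs2]
    linarith
  have hjj : j < j' := (dd_anti hp).lt_iff_gt.mp hdp
  have hjgap : j + 2 ≤ j' := by
    obtain ⟨a, ha⟩ := hje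
    obtain ⟨b, hb⟩ := hje'
    omega
  have hqp : qden αp j < qden αp j' :=
    lt_of_lt_of_le (qden_strict2 hp j) (qden_le hp hjgap)
  have hrden2 : (r.den : ℤ) = qden αp j := (conv_den hp r j hj).2
  have hsden2 : (s.den : ℤ) = qden αp j' := (conv_den hp s j' hj').2
  omega

lemma uniq (αm αp : ℝ) (hm : Irrational αm) (hp : Irrational αp) (r s : ℚ)
    (hr1 : αm < (r:ℝ)) (hr2 : (r:ℝ) < αp) (hs1 : αm < (s:ℝ)) (hs2 : (s:ℝ) < αp)
    (hrm : ∃ n, (r:ℝ) = (pnum αm n : ℝ)/(qden αm n : ℝ))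
    (hrp : ∃ n, (r:ℝ) = (pnum αp n : ℝ)/(qden αp n : ℝ))
    (hsm : ∃ n, (s:ℝ) = (pnum αm n : ℝ)/(qden αm n : ℝ))
    (hsp : ∃ n, (s:ℝ) = (pnum αp n : ℝ)/(qden αp n : ℝ)) : r = s := by
  by_contra hne
  have hne' : (r:ℝ) ≠ (s:ℝ) := by
    intro h
    exact hne (by exact_mod_cast h)
  rcases lt_or_gt_of_ne hne' with h | h
  · exact uniq_aux αm αp hm hp r s hr1 hs2 hrm hrp hsm hsp h
  · exact uniq_aux αm αp hm hp s r hs1 hr2 hsm hsp hrm hrp h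

end S16
namespace S16

set_option maxHeartbeats 1600000 in
lemma branch (Ms : ℕ → ℝ) (lo hi b₁ b₂ : ℝ) (N : ℕ)
    (hsub : Set.Ioo lo hi ⊆ (KstarR Ms)ᶜ)
    (hK1 : b₁ ∈ KstarR Ms) (hK2 : b₂ ∈ KstarR Ms)
    (hpre : ∀ i, i < N → pquot b₁ i = pquot b₂ i)
    (hdiff : pquot b₁ N ≠ pquot b₂ N)
    (hcompat : (b₁ = lo ∧ b₂ = hi ∧ Even N) ∨ (b₁ = hi ∧ b₂ = lo ∧ Odd N))
    (hlohi : lo < hi) :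
    ∃ r₀ : ℚ, (lo < (r₀:ℝ) ∧ (r₀:ℝ) < hi) ∧
      (∃ n, (r₀:ℝ) = (pnum b₁ n : ℝ)/(qden b₁ n : ℝ)) ∧
      (∃ n, (r₀:ℝ) = (pnum b₂ n : ℝ)/(qden b₂ n : ℝ)) ∧
      (∀ s : ℚ, lo < (s:ℝ) → (s:ℝ) < hi → s ≠ r₀ → (r₀.den : ℤ) < (s.den : ℤ)) := by
  have irr1 : Irrational b₁ := hK1.1
  have irr2 : Irrational b₂ := hK2.1
  -- coefficients
  set P : ℤ := PP b₂ (N+1) with hPdef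
  set P' : ℤ := PP b₂ N with hP'def
  set Q : ℤ := QQ b₂ (N+1) with hQdef
  set Q' : ℤ := QQ b₂ N with hQ'def
  obtain ⟨hPP1, hQQ1, hPP0, hQQ0⟩ := PQ_congr N hpre
  set ε : ℤ := (-1)^N with hεdef
  have hε : ε = 1 ∨ ε = -1 := by
    rcases Nat.even_or_odd N with he | ho
    · left; rw [hεdef, he.neg_one_pow]
    · right; rw [hεdef, ho.neg_one_pow]
  have hdetε : P * Q' - P' * Q = ε := det_PQ b₂ N
  have hdetR : (P:ℝ) * (Q':ℝ) - (P':ℝ) * (Q:ℝ) = (ε:ℝ) := by exact_mod_cast hdetε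
  have hεR : (ε:ℝ) = 1 ∨ (ε:ℝ) = -1 := by
    rcases hε with h | h <;> [left; right] <;> exact_mod_cast h
  have hε2 : (ε:ℝ) * (ε:ℝ) = 1 := by rcases hεR with h | h <;> rw [h] <;> norm_num
  set A₁ : ℤ := pquot b₁ N with hA₁def
  set A₂ : ℤ := pquot b₂ N with hA₂def
  set h₁ : ℝ := hseq b₁ N with hh₁def
  set h₂ : ℝ := hseq b₂ N with hh₂def
  have hA1pos : N ≠ 0 → 1 ≤ A₁ := by
    intro hN
    have hN1 : N = (N-1)+1 := by omega
    rw [hA₁def, hN1]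
    exact pquot_pos irr1 (N-1)
  have hA2pos : N ≠ 0 → 1 ≤ A₂ := by
    intro hN
    have hN1 : N = (N-1)+1 := by omega
    rw [hA₂def, hN1]
    exact pquot_pos irr2 (N-1)
  have hwin1 := hseq_window irr1 N
  have hwin2 := hseq_window irr2 N
  rw [← hA₁def, ← hh₁def] at hwin1
  rw [← hA₂def, ← hh₂def] at hwin2
  have hh1pos : N ≠ 0 → 0 < h₁ := by
    intro hN
    have := hA1pos hN
    have h1 : (1:ℝ) ≤ (A₁:ℝ) := by exact_mod_cast this
    linarith [hwin1.1]
  have hh2pos : N ≠ 0 → 0 < h₂ := by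
    intro hN
    have := hA2pos hN
    have h1 : (1:ℝ) ≤ (A₂:ℝ) := by exact_mod_cast this
    linarith [hwin2.1]
  -- denominators
  have hQnn : (0:ℝ) ≤ (Q:ℝ) := by exact_mod_cast QQ_nonneg irr2 (N+1)
  have hQ'nn : (0:ℝ) ≤ (Q':ℝ) := by exact_mod_cast QQ_nonneg irr2 N
  have hDpos : ∀ t : ℝ, (N ≠ 0 → 0 < t) → 0 < (Q:ℝ) * t + (Q':ℝ) := by
    intro t ht
    exact DD_pos irr2 N ht
  have hD1 : 0 < (Q:ℝ) * h₁ + (Q':ℝ) := hDpos h₁ hh1pos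
  have hD2 : 0 < (Q:ℝ) * h₂ + (Q':ℝ) := hDpos h₂ hh2pos
  -- values
  have hval1 : b₁ = FF b₂ N h₁ := by
    have hCL := CL irr1 N
    rw [hPP1, hQQ1, hPP0, hQQ0] at hCL
    rw [FF, eq_div_iff (ne_of_gt hD1)]
    exact hCL
  have hval2 : b₂ = FF b₂ N h₂ := by
    have hCL := CL irr2 N
    rw [FF, eq_div_iff (ne_of_gt hD2)]
    exact hCL
  -- order iff
  have hFiff : ∀ t s : ℝ, 0 < (Q:ℝ)*t + Q' → 0 < (Q:ℝ)*s + Q' →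
      (FF b₂ N t < FF b₂ N s ↔ (ε:ℝ) * t < (ε:ℝ) * s) := by
    intro t s hDt hDs
    rw [FF, FF, div_lt_div_iff₀ hDt hDs]
    have key : ((P:ℝ)*s + P') * ((Q:ℝ)*t + Q') - ((P:ℝ)*t + P') * ((Q:ℝ)*s + Q')
        = (ε:ℝ) * (s - t) := by linear_combination (s - t) * hdetR
    constructor
    · intro hlt
      nlinarith [key]
    · intro hlt
      nlinarith [key]
  -- membership characterization
  have hmem : ∀ t : ℝ, 0 < (Q:ℝ)*t + Q' →
      ((lo < FF b₂ N t ∧ FF b₂ N t < hi) ↔ (h₁ < t ∧ t < h₂)) := by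
    intro t hDt
    rcases hcompat with ⟨e1, e2, hev⟩ | ⟨e1, e2, hod⟩
    · have hε1 : (ε:ℝ) = 1 := by
        rw [hεdef]; push_cast; rw [hev.neg_one_pow]
      have hloF : lo = FF b₂ N h₁ := by rw [← e1]; exact hval1
      have hhiF : hi = FF b₂ N h₂ := by rw [← e2]; exact hval2
      rw [hloF, hhiF, hFiff h₁ t hD1 hDt, hFiff t h₂ hDt hD2, hε1]
      simp
    · have hε1 : (ε:ℝ) = -1 := by
        rw [hεdef]; push_cast; rw [hod.neg_one_pow]
      have hloF : lo = FF b₂ N h₂ := by rw [← e2]; exact hval2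
      have hhiF : hi = FF b₂ N h₁ := by rw [← e1]; exact hval1
      rw [hloF, hhiF, hFiff h₂ t hD2 hDt, hFiff t h₁ hDt hD1, hε1]
      constructor
      · rintro ⟨u1, u2⟩
        constructor <;> linarith
      · rintro ⟨u1, u2⟩
        constructor <;> linarith
  -- h order
  have hh12 : h₁ < h₂ := by
    rcases hcompat with ⟨e1, e2, hev⟩ | ⟨e1, e2, hod⟩
    · have hε1 : (ε:ℝ) = 1 := by
        rw [hεdef]; push_cast; rw [hev.neg_one_pow]
      have : FF b₂ N h₁ < FF b₂ N h₂ := by rw [← hval1, ← hval2, e1, e2]; exact hlohi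
      have h2 := (hFiff h₁ h₂ hD1 hD2).mp this
      rw [hε1] at h2; linarith
    · have hε1 : (ε:ℝ) = -1 := by
        rw [hεdef]; push_cast; rw [hod.neg_one_pow]
      have : FF b₂ N h₂ < FF b₂ N h₁ := by rw [← hval1, ← hval2, e1, e2]; exact hlohi
      have h2 := (hFiff h₂ h₁ hD2 hD1).mp this
      rw [hε1] at h2; linarith
  have hA12 : A₁ < A₂ := by
    have h1 : (A₁:ℝ) < (A₂:ℝ) + 1 := by linarith [hwin1.1, hwin2.2]
    have h2 : A₁ ≤ A₂ := by exact_mod_cast Int.lt_add_one_iff.mp (by exact_mod_cast h1)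
    rcases lt_or_eq_of_le h2 with h | h
    · exact h
    · exact absurd h hdiff
  -- STEP 1 : A₂ = A₁ + 1
  have hstep1 : A₂ = A₁ + 1 := by
    by_contra hne
    have hge : A₁ + 2 ≤ A₂ := by omega
    have hcA : N ≠ 0 → 0 ≤ A₁ := fun hN => by linarith [hA1pos hN]
    have hzK : FF b₂ N ((A₁:ℝ) + gold) ∈ KstarR Ms :=
      noble_mem Ms hK2 N A₁ hcA (by omega)
    have htpos : N ≠ 0 → 0 < (A₁:ℝ) + gold := by
      intro hN
      have := hA1pos hN
      have h1 : (1:ℝ) ≤ (A₁:ℝ) := by exact_mod_cast this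
      linarith [gold_gt]
    have hDz : 0 < (Q:ℝ) * ((A₁:ℝ) + gold) + Q' := hDpos _ htpos
    have hmemz : lo < FF b₂ N ((A₁:ℝ) + gold) ∧ FF b₂ N ((A₁:ℝ) + gold) < hi := by
      apply (hmem _ hDz).mpr
      have hgeR : (A₁:ℝ) + 2 ≤ (A₂:ℝ) := by exact_mod_cast hge
      constructor
      · linarith [hwin1.2, gold_gt]
      · linarith [hwin2.1, gold_lt]
    exact (hsub ⟨hmemz.1, hmemz.2⟩) hzK
  -- function congruence
  have hFFeq : ∀ t : ℝ, FF b₁ N t = FF b₂ N t := by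
    intro t
    simp only [FF, hPP1, hQQ1, hPP0, hQQ0]
  -- STEP 2 : pquot b₁ (N+1) = 1
  have hstep2 : pquot b₁ (N+1) = 1 := by
    by_contra hne
    have hge : 2 ≤ pquot b₁ (N+1) := by
      have := pquot_pos irr1 N
      omega
    have hgbound : gaussIter b₁ N < 1/2 := by
      rw [gauss_eq_inv_hseq]
      have hw := hseq_window irr1 (N+1)
      have h2 : (2:ℝ) ≤ (pquot b₁ (N+1) : ℝ) := by exact_mod_cast hge
      have hgt : 2 < hseq b₁ (N+1) := by linarith [hw.1]
      rw [inv_lt_comm₀ (by linarith) (by norm_num)]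
      linarith
    have hh1lt : h₁ < (A₁:ℝ) + 1/2 := by
      have : h₁ = (A₁:ℝ) + gaussIter b₁ N := rfl
      rw [this]
      linarith
    have hcA : N ≠ 0 → 0 ≤ A₁ - 1 := fun hN => by linarith [hA1pos hN]
    have hzK : FF b₁ N (((A₁ - 1 : ℤ):ℝ) + gold) ∈ KstarR Ms :=
      noble_mem Ms hK1 N (A₁ - 1) hcA (by omega)
    rw [hFFeq] at hzK
    set t' : ℝ := ((A₁ - 1 : ℤ):ℝ) + gold with ht'def
    have ht'eq : t' = (A₁:ℝ) + (gold - 1) := by rw [ht'def]; push_cast; ring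
    have htpos : N ≠ 0 → 0 < t' := by
      intro hN
      have := hA1pos hN
      have h1 : (1:ℝ) ≤ (A₁:ℝ) := by exact_mod_cast this
      rw [ht'eq]
      linarith [gold_gt]
    have hDz : 0 < (Q:ℝ) * t' + Q' := hDpos _ htpos
    have hA2R : (A₂:ℝ) = (A₁:ℝ) + 1 := by exact_mod_cast hstep1
    have hmemz : lo < FF b₂ N t' ∧ FF b₂ N t' < hi := by
      apply (hmem _ hDz).mpr
      rw [ht'eq]
      constructor
      · linarith [gold_gt]
      · have := hwin2.1
        rw [hA2R] at this
        linarith [gold_lt]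
    exact (hsub ⟨hmemz.1, hmemz.2⟩) hzK
  clear_value P P' Q Q' ε A₁ A₂
  -- the pseudo-center
  have hpeq : pnum b₂ N = A₂ * P + P' := by
    rw [hA₂def, hPdef, hP'def]
    have h := PP_rec b₂ N
    rw [PP_eq] at h
    exact h
  have hqeq : qden b₂ N = A₂ * Q + Q' := by
    rw [hA₂def, hQdef, hQ'def]
    have h := QQ_rec b₂ N
    rw [QQ_eq] at h
    exact h
  have hqNpos : 1 ≤ qden b₂ N := qden_pos irr2 N
  set r₀ : ℚ := (pnum b₂ N : ℚ) / (qden b₂ N : ℚ) with hr₀def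
  have hr₀cast : (r₀:ℝ) = (pnum b₂ N : ℝ)/(qden b₂ N : ℝ) := by
    rw [hr₀def]
    push_cast
    ring
  have heq2 : Q * ((A₁:ℤ) + 1) + Q' = qden b₂ N := by rw [hqeq, hstep1]; ring
  have hDr : 0 < (Q:ℝ) * ((A₁:ℝ) + 1) + (Q':ℝ) := by
    have hcast : ((Q * ((A₁:ℤ) + 1) + Q' : ℤ) : ℝ) = (Q:ℝ) * ((A₁:ℝ) + 1) + (Q':ℝ) := by
      push_cast; ring
    rw [← hcast, heq2]
    exact_mod_cast hqNpos
  have hFFr : FF b₂ N ((A₁:ℝ) + 1) = (pnum b₂ N : ℝ)/(qden b₂ N : ℝ) := by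
    have hnum : (pnum b₂ N : ℝ) = (P:ℝ) * ((A₁:ℝ)+1) + (P':ℝ) := by
      rw [hpeq, hstep1]; push_cast; ring
    have hden : (qden b₂ N : ℝ) = (Q:ℝ) * ((A₁:ℝ)+1) + (Q':ℝ) := by
      rw [hqeq, hstep1]; push_cast; ring
    rw [FF, ← hPdef, ← hP'def, ← hQdef, ← hQ'def, hnum, hden]
  have hA2R : (A₂:ℝ) = (A₁:ℝ) + 1 := by exact_mod_cast hstep1
  have hr₀mem : lo < (r₀:ℝ) ∧ (r₀:ℝ) < hi := by
    rw [hr₀cast, ← hFFr]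
    apply (hmem _ hDr).mpr
    constructor
    · exact lt_of_lt_of_le hwin1.2 (le_refl _)
    · rw [← hA2R]; exact hwin2.1
  -- r₀ is a convergent of b₁ at index N+1
  have hpnum1 : pnum b₁ (N+1) = pnum b₂ N := by
    have h1 : pnum b₁ (N+1) = pquot b₁ (N+1) * PP b₁ (N+2) + PP b₁ (N+1) := by
      have := PP_rec b₁ (N+1)
      rw [PP_eq] at this
      exact this
    have h2 : PP b₁ (N+2) = A₁ * P + P' := by
      have h3 := PP_rec b₁ N
      rw [hPP1, hPP0, ← hPdef, ← hP'def, ← hA₁def] at h3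
      exact h3
    rw [h1, hstep2, h2, hPP1, ← hPdef, hpeq, hstep1]
    ring
  have hqden1 : qden b₁ (N+1) = qden b₂ N := by
    have h1 : qden b₁ (N+1) = pquot b₁ (N+1) * QQ b₁ (N+2) + QQ b₁ (N+1) := by
      have := QQ_rec b₁ (N+1)
      rw [QQ_eq] at this
      exact this
    have h2 : QQ b₁ (N+2) = A₁ * Q + Q' := by
      have h3 := QQ_rec b₁ N
      rw [hQQ1, hQQ0, ← hQdef, ← hQ'def, ← hA₁def] at h3
      exact h3
    rw [h1, hstep2, h2, hQQ1, ← hQdef, hqeq, hstep1]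
    ring
  have hconv1 : (r₀:ℝ) = (pnum b₁ (N+1) : ℝ)/(qden b₁ (N+1) : ℝ) := by
    rw [hr₀cast, hpnum1, hqden1]
  -- minimality
  have hrden : (r₀.den : ℤ) = qden b₂ N := (conv_den irr2 r₀ N hr₀cast).2
  have hrnum : r₀.num = pnum b₂ N := (conv_den irr2 r₀ N hr₀cast).1
  refine ⟨r₀, hr₀mem, ⟨N+1, hconv1⟩, ⟨N, hr₀cast⟩, ?_⟩
  intro s hs1 hs2 hs3
  have hε2z : ε * ε = 1 := by rcases hε with h | h <;> rw [h] <;> norm_num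
  set U : ℤ := -ε * (P' * (s.den:ℤ) - Q' * s.num) with hUdef
  set V : ℤ := -ε * (Q * s.num - P * (s.den:ℤ)) with hVdef
  clear_value U V
  have hPU : P * U + P' * V = s.num := by
    rw [hUdef, hVdef]
    linear_combination (ε * s.num) * hdetε + s.num * hε2z
  have hQU : Q * U + Q' * V = (s.den:ℤ) := by
    rw [hUdef, hVdef]
    linear_combination (ε * (s.den:ℤ)) * hdetε + (s.den:ℤ) * hε2z
  have hsdpos : (0:ℝ) < (s.den:ℝ) := by exact_mod_cast s.pos
  have hsnum : (s.num:ℝ) = (s:ℝ) * (s.den:ℝ) := by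
    rw [Rat.cast_def]
    field_simp
  have hVR : (V:ℝ) = -(ε:ℝ) * (s.den:ℝ) * ((Q:ℝ) * (s:ℝ) - (P:ℝ)) := by
    rw [hVdef]
    push_cast
    rw [hsnum]
    ring
  have hVpos : 0 < V := by
    have hVRpos : (0:ℝ) < (V:ℝ) := by
      rcases Nat.eq_zero_or_pos N with hN0 | hNpos
      · have hQ0 : Q = 0 := by rw [hQdef, hN0]; rfl
        have hP1 : P = 1 := by rw [hPdef, hN0]; rfl
        have hε1 : ε = 1 := by rw [hεdef, hN0]; norm_num
        rw [hVR, hQ0, hP1, hε1]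
        push_cast
        nlinarith
      · have hNm : N = (N-1) + 1 := by omega
        have hPm : (P:ℝ) = (pnum b₂ (N-1) : ℝ) := by
          rw [hPdef, hNm]; rfl
        have hQm : (Q:ℝ) = (qden b₂ (N-1) : ℝ) := by
          rw [hQdef, hNm]; rfl
        have hQpos : (0:ℝ) < (Q:ℝ) := by
          rw [hQm]; exact_mod_cast qden_pos irr2 (N-1)
        rcases hcompat with ⟨e1, e2, hev⟩ | ⟨e1, e2, hod⟩
        · have hmodd : Odd (N-1) := by
            rcases hev with ⟨a, ha⟩
            exact ⟨a - 1, by omega⟩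
          have hconvm : b₂ < (pnum b₂ (N-1) : ℝ)/(qden b₂ (N-1) : ℝ) :=
            conv_gt_of_odd irr2 hmodd
          have hε1 : (ε:ℝ) = 1 := by
            rw [hεdef]; push_cast; rw [hev.neg_one_pow]
          have hslt : (s:ℝ) < (P:ℝ)/(Q:ℝ) := by
            rw [hPm, hQm]
            calc (s:ℝ) < hi := hs2
            _ = b₂ := e2.symm
            _ < _ := hconvm
          rw [lt_div_iff₀ hQpos] at hslt
          rw [hVR, hε1]
          nlinarith
        · have hmeven : Even (N-1) := by
            rcases hod with ⟨a, ha⟩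
            exact ⟨a, by omega⟩
          have hconvm : (pnum b₂ (N-1) : ℝ)/(qden b₂ (N-1) : ℝ) < b₂ :=
            conv_lt_of_even irr2 hmeven
          have hε1 : (ε:ℝ) = -1 := by
            rw [hεdef]; push_cast; rw [hod.neg_one_pow]
          have hslt : (P:ℝ)/(Q:ℝ) < (s:ℝ) := by
            rw [hPm, hQm]
            calc (pnum b₂ (N-1) : ℝ)/(qden b₂ (N-1) : ℝ) < b₂ := hconvm
            _ = lo := e2
            _ < _ := hs1
          rw [div_lt_iff₀ hQpos] at hslt
          rw [hVR, hε1]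
          nlinarith
    exact_mod_cast hVRpos
  have hVRpos : (0:ℝ) < (V:ℝ) := by exact_mod_cast hVpos
  have hVne : (V:ℝ) ≠ 0 := ne_of_gt hVRpos
  have hQUR : (Q:ℝ)*(U:ℝ) + (Q':ℝ)*(V:ℝ) = (s.den:ℝ) := by exact_mod_cast hQU
  have hPUR : (P:ℝ)*(U:ℝ) + (P':ℝ)*(V:ℝ) = (s.num:ℝ) := by exact_mod_cast hPU
  have hDUV : (Q:ℝ)*((U:ℝ)/(V:ℝ)) + (Q':ℝ) = (s.den:ℝ)/(V:ℝ) := by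
    field_simp
    linear_combination hQUR
  have hDUVpos : 0 < (Q:ℝ)*((U:ℝ)/(V:ℝ)) + (Q':ℝ) := by
    rw [hDUV]
    positivity
  have hsFF : FF b₂ N ((U:ℝ)/(V:ℝ)) = (s:ℝ) := by
    rw [FF, ← hPdef, ← hP'def, ← hQdef, ← hQ'def, eq_comm, eq_div_iff (ne_of_gt hDUVpos), hDUV]
    field_simp
    linear_combination (-1:ℝ) * hPUR - hsnum
  have hsmem2 : h₁ < (U:ℝ)/(V:ℝ) ∧ (U:ℝ)/(V:ℝ) < h₂ :=
    (hmem _ hDUVpos).mp (by rw [hsFF]; exact ⟨hs1, hs2⟩)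
  have hU_lb : A₁ * V + 1 ≤ U := by
    have h1 : (A₁:ℝ) < (U:ℝ)/(V:ℝ) := lt_trans hwin1.1 hsmem2.1
    rw [lt_div_iff₀ hVRpos] at h1
    have h2 : A₁ * V < U := by exact_mod_cast h1
    exact Int.add_one_le_iff.mpr h2
  have hU_ub : U < (A₁ + 2) * V := by
    have h2' : (U:ℝ)/(V:ℝ) < (A₁:ℝ) + 2 := by
      have hw := hwin2.2
      rw [hA2R] at hw
      linarith [hsmem2.2]
    rw [div_lt_iff₀ hVRpos] at h2'
    exact_mod_cast h2'
  have hV1 : 1 ≤ V := hVpos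
  rcases eq_or_lt_of_le hV1 with hVeq | hV2
  · have hVeq1 : V = 1 := hVeq.symm
    have hUeq : U = A₁ + 1 := by
      rw [hVeq1] at hU_lb hU_ub
      omega
    have hsnum_eq : s.num = pnum b₂ N := by
      rw [← hPU, hUeq, hVeq1, hpeq, hstep1]
      ring
    have hsden_eq : (s.den:ℤ) = qden b₂ N := by
      rw [← hQU, hUeq, hVeq1, hqeq, hstep1]
      ring
    have hsr : s = r₀ := by
      have hd : s.den = r₀.den := by
        have hdz : (s.den:ℤ) = (r₀.den:ℤ) := by rw [hsden_eq, hrden]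
        exact_mod_cast hdz
      have hn : s.num = r₀.num := by rw [hsnum_eq, hrnum]
      exact Rat.ext hn hd
    exact absurd hsr hs3
  · have hQnnz : 0 ≤ Q := by rw [hQdef]; exact QQ_nonneg irr2 (N+1)
    have hQ'nnz : 0 ≤ Q' := by rw [hQ'def]; exact QQ_nonneg irr2 N
    have hQA : 1 ≤ Q * A₁ + Q' := by
      rcases Nat.eq_zero_or_pos N with hN0 | hNpos
      · have hQ0 : Q = 0 := by rw [hQdef, hN0]; rfl
        have hQ'1 : Q' = 1 := by rw [hQ'def, hN0]; rfl
        rw [hQ0, hQ'1]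
        simp
      · have hA1' := hA1pos (by omega)
        have hq := qden_pos irr2 (N-1)
        have hQ1 : 1 ≤ Q := by
          have h := hq
          rw [← QQ_eq] at h
          have hidx : (N-1)+2 = N+1 := by omega
          rw [hidx] at h
          rw [hQdef]
          exact h
        nlinarith
    have key1 : Q * (A₁ * V + 1) ≤ Q * U := mul_le_mul_of_nonneg_left hU_lb hQnnz
    have key2 : 2 * (Q * A₁ + Q') ≤ V * (Q * A₁ + Q') := by nlinarith
    have hfin : Q * (A₁ + 1) + Q' < (s.den:ℤ) := by nlinarith [hQU]
    rw [hrden, ← heq2]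
    exact hfin

end S16

namespace S16

lemma endpoints_mem (Ms : ℕ → ℝ) (αm αp x : ℝ) (hxA : x ∈ (KstarR Ms)ᶜ)
    (hconn : connectedComponentIn (KstarR Ms)ᶜ x = Set.Ioo αm αp) :
    αm < αp ∧ Set.Ioo αm αp ⊆ (KstarR Ms)ᶜ ∧ αm ∈ KstarR Ms ∧ αp ∈ KstarR Ms := by
  have hIoo_sub : Set.Ioo αm αp ⊆ (KstarR Ms)ᶜ := by
    rw [← hconn]; exact connectedComponentIn_subset _ _
  have hxI : x ∈ Set.Ioo αm αp := by
    rw [← hconn]; exact mem_connectedComponentIn hxA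
  have hlt : αm < αp := lt_trans hxI.1 hxI.2
  refine ⟨hlt, hIoo_sub, ?_, ?_⟩
  · by_contra hm
    have hIco : Set.Ico αm αp ⊆ (KstarR Ms)ᶜ := by
      intro z hz
      rcases eq_or_lt_of_le hz.1 with he | hlt2
      · rw [← he]; exact hm
      · exact hIoo_sub ⟨hlt2, hz.2⟩
    have hpc : IsPreconnected (Set.Ico αm αp) := (Set.ordConnected_Ico).isPreconnected
    have hsub2 : Set.Ico αm αp ⊆ connectedComponentIn (KstarR Ms)ᶜ x :=
      hpc.subset_connectedComponentIn ⟨le_of_lt hxI.1, hxI.2⟩ hIco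
    rw [hconn] at hsub2
    have : αm ∈ Set.Ioo αm αp := hsub2 ⟨le_refl _, hlt⟩
    exact lt_irrefl αm this.1
  · by_contra hp
    have hIoc : Set.Ioc αm αp ⊆ (KstarR Ms)ᶜ := by
      intro z hz
      rcases eq_or_lt_of_le hz.2 with he | hlt2
      · rw [he]; exact hp
      · exact hIoo_sub ⟨hz.1, hlt2⟩
    have hpc : IsPreconnected (Set.Ioc αm αp) := (Set.ordConnected_Ioc).isPreconnected
    have hsub2 : Set.Ioc αm αp ⊆ connectedComponentIn (KstarR Ms)ᶜ x :=
      hpc.subset_connectedComponentIn ⟨hxI.1, le_of_lt hxI.2⟩ hIoc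
    rw [hconn] at hsub2
    have : αp ∈ Set.Ioo αm αp := hsub2 ⟨hlt, le_refl _⟩
    exact lt_irrefl αp this.2

end S16


/-- each bounded connected component of `A* = ℝ \ K*` contains exactly
one rational which is a convergent of both endpoints, and this common convergent is
the rational of strictly least reduced denominator of the component. -/
theorem statement16 (Ms : ℕ → ℝ) (hMpos : ∀ n, 0 < Ms n) (hMdec : Antitone Ms)
    (hMlim : Filter.Tendsto Ms Filter.atTop (nhds 0))
    (αm αp : ℝ)
    (hcomp : ∃ x ∈ (KstarR Ms)ᶜ,
      connectedComponentIn (KstarR Ms)ᶜ x = Set.Ioo αm αp) :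
    (∃! r : ℚ, (αm < (r : ℝ) ∧ (r : ℝ) < αp) ∧
      (∃ n : ℕ, (r : ℝ) = (pnum αm n : ℝ) / (qden αm n : ℝ)) ∧
      (∃ n : ℕ, (r : ℝ) = (pnum αp n : ℝ) / (qden αp n : ℝ))) ∧
    (∀ r : ℚ, (αm < (r : ℝ) ∧ (r : ℝ) < αp) →
      (∃ n : ℕ, (r : ℝ) = (pnum αm n : ℝ) / (qden αm n : ℝ)) →
      (∃ n : ℕ, (r : ℝ) = (pnum αp n : ℝ) / (qden αp n : ℝ)) →
      ∀ s : ℚ, αm < (s : ℝ) → (s : ℝ) < αp → s ≠ r → r.den < s.den) := by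
  classical
  obtain ⟨x, hxA, hconn⟩ := hcomp
  obtain ⟨hlt, hIoo_sub, hαmK, hαpK⟩ := S16.endpoints_mem Ms αm αp x hxA hconn
  have hNex : ∃ k, pquot αm k ≠ pquot αp k := by
    by_contra hc
    push_neg at hc
    exact (ne_of_lt hlt) (S16.eq_of_pquot_eq hαmK.1 hαpK.1 hc)
  set N := Nat.find hNex with hNdef
  have hdiffN : pquot αm N ≠ pquot αp N := Nat.find_spec hNex
  have hpreN : ∀ i, i < N → pquot αm i = pquot αp i := fun i hi =>
    not_not.mp (Nat.find_min hNex hi)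
  have hbr : ∃ r₀ : ℚ, (αm < (r₀:ℝ) ∧ (r₀:ℝ) < αp) ∧
      (∃ n, (r₀:ℝ) = (pnum αm n : ℝ)/(qden αm n : ℝ)) ∧
      (∃ n, (r₀:ℝ) = (pnum αp n : ℝ)/(qden αp n : ℝ)) ∧
      (∀ s : ℚ, αm < (s:ℝ) → (s:ℝ) < αp → s ≠ r₀ → (r₀.den : ℤ) < (s.den : ℤ)) := by
    rcases Nat.even_or_odd N with he | ho
    · exact S16.branch Ms αm αp αm αp N hIoo_sub hαmK hαpK hpreN hdiffN
        (Or.inl ⟨rfl, rfl, he⟩) hlt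
    · obtain ⟨r₀, hmem, hc1, hc2, hmin⟩ :=
        S16.branch Ms αm αp αp αm N hIoo_sub hαpK hαmK
          (fun i hi => (hpreN i hi).symm) (Ne.symm hdiffN) (Or.inr ⟨rfl, rfl, ho⟩) hlt
      exact ⟨r₀, hmem, hc2, hc1, hmin⟩
  obtain ⟨r₀, hmem, hcm, hcp, hmin⟩ := hbr
  constructor
  · refine ⟨r₀, ⟨hmem, hcm, hcp⟩, ?_⟩
    rintro y ⟨⟨hy1, hy2⟩, hym, hyp⟩
    exact S16.uniq αm αp hαmK.1 hαpK.1 y r₀ hy1 hy2 hmem.1 hmem.2 hym hyp hcm hcp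
  · rintro r ⟨hr1, hr2⟩ hrm hrp s hs1 hs2 hsr
    have hre : r = r₀ := S16.uniq αm αp hαmK.1 hαpK.1 r r₀ hr1 hr2 hmem.1 hmem.2 hrm hrp hcm hcp
    have hsne : s ≠ r₀ := by rw [← hre]; exact hsr
    have h := hmin s hs1 hs2 hsne
    rw [hre]
    exact_mod_cast h
end
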